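/- Define B⋆(F) = −(1/2)·(1 + log(‖F‖_op²))·det F + (1/2)·‖F‖_op² on GL⁺(2), and W⁺_magic(F) = λmax/λmin − log(λmax/λmin) + log(det F). Then the Shield transformation satisfies B⋆#(F) = (1/2)·(W⁺_magic(F) − 1) for all F ∈ GL⁺(2). -/

import Mathlib

/-- The operator norm (largest singular value) of a planar matrix. -/
noncomputable def opNorm2 (F : Matrix (Fin 2) (Fin 2) ℝ) : ℝ :=
  ‖Matrix.toEuclideanCLM (𝕜 := ℝ) F‖

/-- The Shield transformation W#(F) = det F · W(F⁻¹). -/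
noncomputable def shield (W : Matrix (Fin 2) (Fin 2) ℝ → ℝ)
    (F : Matrix (Fin 2) (Fin 2) ℝ) : ℝ :=
  F.det * W F⁻¹

/-- B⋆(F) = −(1/2)(1 + log(‖F‖_op²))·det F + (1/2)‖F‖_op². -/
noncomputable def Bstar (F : Matrix (Fin 2) (Fin 2) ℝ) : ℝ :=
  -(1/2) * (1 + Real.log (opNorm2 F^2)) * F.det + (1/2) * opNorm2 F^2

/-- W⁺_magic(F) = λmax/λmin − log(λmax/λmin) + log det F, where λmax = ‖F‖_op
and λmin = det F / λmax are the singular values of F ∈ GL⁺(2). -/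
noncomputable def WmagicPlus (F : Matrix (Fin 2) (Fin 2) ℝ) : ℝ :=
  let lmax := opNorm2 F
  let lmin := F.det / lmax
  lmax / lmin - Real.log (lmax / lmin) + Real.log F.det

section Aux

open scoped Matrix.Norms.L2Operator
open Matrix

lemma opNorm2_eq_norm (F : Matrix (Fin 2) (Fin 2) ℝ) : opNorm2 F = ‖F‖ := rfl

/-- The 90° rotation matrix, used to relate the adjugate to the transpose. -/
def Jmat : Matrix (Fin 2) (Fin 2) ℝ :=
  Matrix.of fun i j => if i = 0 ∧ j = 1 then 1 else if i = 1 ∧ j = 0 then -1 else 0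

lemma Jmat_unitary : Jmat ∈ unitary (Matrix (Fin 2) (Fin 2) ℝ) := by
  constructor <;>
    · ext i j
      fin_cases i <;> fin_cases j <;>
        simp [Jmat, Matrix.mul_apply, Fin.sum_univ_two, Matrix.one_apply, star,
          Matrix.conjTranspose_apply, Matrix.vecHead, Matrix.vecTail]

lemma adjugate_eq (M : Matrix (Fin 2) (Fin 2) ℝ) :
    M.adjugate = Jmat * Mᵀ * star Jmat := by
  ext i j
  fin_cases i <;> fin_cases j <;>
    simp [Jmat, Matrix.mul_apply, Fin.sum_univ_two, Matrix.adjugate_fin_two, star,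
      Matrix.conjTranspose_apply, Matrix.transpose_apply, Matrix.vecHead, Matrix.vecTail,
      Matrix.vecMul, dotProduct]

lemma norm_adjugate (M : Matrix (Fin 2) (Fin 2) ℝ) : ‖M.adjugate‖ = ‖M‖ := by
  rw [adjugate_eq]
  have hU : Jmat ∈ unitary (Matrix (Fin 2) (Fin 2) ℝ) := Jmat_unitary
  calc ‖Jmat * Mᵀ * star Jmat‖ = ‖Jmat * (Mᵀ * star Jmat)‖ := by rw [mul_assoc]
    _ = ‖Mᵀ * star Jmat‖ := CStarRing.norm_coe_unitary_mul ⟨Jmat, hU⟩ _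
    _ = ‖Mᵀ‖ := CStarRing.norm_mul_coe_unitary _ ⟨star Jmat, Unitary.star_mem hU⟩
    _ = ‖M‖ := by
        have : Mᵀ = Mᴴ := by ext i j; simp [Matrix.conjTranspose_apply]
        rw [this, Matrix.l2_opNorm_conjTranspose]

/-- The operator norm of the inverse of a 2×2 matrix with positive determinant. -/
lemma opNorm2_inv (F : Matrix (Fin 2) (Fin 2) ℝ) (hdet : 0 < F.det) :
    opNorm2 F⁻¹ = opNorm2 F / F.det := by
  rw [opNorm2_eq_norm, opNorm2_eq_norm, Matrix.inv_def, Ring.inverse_eq_inv', norm_smul,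
    norm_adjugate, Real.norm_eq_abs, abs_inv, abs_of_pos hdet, div_eq_inv_mul]

lemma opNorm2_pos (F : Matrix (Fin 2) (Fin 2) ℝ) (h : F ≠ 0) : 0 < opNorm2 F := by
  rw [opNorm2_eq_norm]; exact norm_pos_iff.mpr h

end Aux

/-- The Shield transformation of B⋆ equals (1/2)(W⁺_magic − 1) on GL⁺(2). -/
theorem stmt_10 (F : Matrix (Fin 2) (Fin 2) ℝ) (hdet : 0 < F.det) :
    shield Bstar F = (1/2) * (WmagicPlus F - 1) := by
  have hF0 : F ≠ 0 := by
    intro h; rw [h] at hdet; simp at hdet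
  have hl : 0 < opNorm2 F := opNorm2_pos F hF0
  have hinv : opNorm2 F⁻¹ = opNorm2 F / F.det := opNorm2_inv F hdet
  have hdetinv : F⁻¹.det = (F.det)⁻¹ := by
    rw [Matrix.det_nonsing_inv, Ring.inverse_eq_inv']
  set l := opNorm2 F with hldef
  set c := F.det with hcdef
  have hc : c ≠ 0 := ne_of_gt hdet
  have hl' : l ≠ 0 := ne_of_gt hl
  have h1 : Real.log ((l/c)^2) = 2*Real.log l - 2*Real.log c := by
    rw [Real.log_pow, Real.log_div hl' hc]; ring
  have h2 : Real.log (l/(c/l)) = 2*Real.log l - Real.log c := by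
    have : l/(c/l) = l^2/c := by field_simp
    rw [this, Real.log_div (pow_ne_zero 2 hl') hc, Real.log_pow]; ring
  rw [shield, Bstar, WmagicPlus, hinv, hdetinv, ← hcdef, ← hldef]
  rw [h1, h2]
  field_simp
  ring
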